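/- Let A ∈ ℤ^{m×n} be an integer matrix where every entry of A is bounded by Δ in absolute value. Then every Graver element g of A satisfies ‖g‖_1 ≤ (2mΔ + 1)^m. -/
import Mathlib

set_option linter.unusedSectionVars false
set_option linter.unusedTactic false
set_option maxHeartbeats 1000000

section Steinitz
variable {ι : Type*} [Fintype ι] [DecidableEq ι] {m : ℕ}

/-- Feasible fractional multiplier vector for the Steinitz-type chain argument. -/
def Feas (v : ι → Fin m → ℚ) (S : Finset ι) (c : ℚ) (μ : ι → ℚ) : Prop :=
  (∀ x, 0 ≤ μ x) ∧ (∀ x, μ x ≤ 1) ∧ (∀ x ∉ S, μ x = 0) ∧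
  (∑ x ∈ S, μ x = c) ∧ (∀ j, ∑ x ∈ S, μ x * v x j = 0)

/-- Set of fractional coordinates. -/
def Frac (S : Finset ι) (μ : ι → ℚ) : Finset ι :=
  S.filter (fun x => μ x ≠ 0 ∧ μ x ≠ 1)

/-- A set is good if it admits a feasible multiplier of total mass `card - m`. -/
def Good (v : ι → Fin m → ℚ) (S : Finset ι) : Prop :=
  ∃ μ, Feas v S ((S.card : ℚ) - m) μ

theorem reduce_frac (v : ι → Fin m → ℚ) (S : Finset ι) (c : ℚ) (μ : ι → ℚ)
    (hμ : Feas v S c μ) (hF : m + 1 < (Frac S μ).card) :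
    ∃ μ', Feas v S c μ' ∧ (Frac S μ').card < (Frac S μ).card := by
  obtain ⟨h0, h1, hsupp, hsum, hker⟩ := hμ
  set F := Frac S μ with hFdef
  -- a nonzero solution of the m+1 homogeneous equations supported on F
  have hFS : F ⊆ S := Finset.filter_subset _ _
  set M : Matrix (Fin (m+1)) (↥F) ℚ :=
    fun r x => Fin.cases 1 (fun j => v x j) r with hM
  have hnotinj : ¬ Function.Injective M.mulVecLin := by
    intro hinj
    have := LinearMap.finrank_le_finrank_of_injective hinj
    rw [Module.finrank_fintype_fun_eq_card, Module.finrank_fintype_fun_eq_card,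
      Fintype.card_coe, Fintype.card_fin] at this
    omega
  have : ∃ d : ↥F → ℚ, d ≠ 0 ∧ M.mulVec d = 0 := by
    by_contra hcon
    push_neg at hcon
    apply hnotinj
    have : LinearMap.ker M.mulVecLin = ⊥ := by
      rw [Submodule.eq_bot_iff]
      intro d hd
      by_contra hne
      exact hcon d hne hd
    exact LinearMap.ker_eq_bot.mp this
  obtain ⟨d, hd0, hdker⟩ := this
  -- extend d to ι
  set D : ι → ℚ := fun x => if h : x ∈ F then d ⟨x, h⟩ else 0 with hD
  have hDF : ∀ x ∉ F, D x = 0 := fun x hx => by simp [hD, hx]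
  have hDsum : ∑ x ∈ S, D x = 0 := by
    have h1 : ∑ x ∈ S, D x = ∑ x ∈ F, D x :=
      (Finset.sum_subset hFS (fun x _ hx => hDF x hx)).symm
    have h2 : ∑ x ∈ F, D x = ∑ x : ↥F, d x := by
      rw [Finset.sum_attach F (fun x => D x) |>.symm]
      apply Finset.sum_congr rfl
      intro x _
      simp [hD, x.2]
    have h3 : ∑ x : ↥F, d x = M.mulVec d 0 := by
      simp [Matrix.mulVec, dotProduct, hM]
    rw [h1, h2, h3, hdker]; rfl
  have hDv : ∀ j, ∑ x ∈ S, D x * v x j = 0 := by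
    intro j
    have h1 : ∑ x ∈ S, D x * v x j = ∑ x ∈ F, D x * v x j :=
      (Finset.sum_subset hFS (fun x _ hx => by rw [hDF x hx, zero_mul])).symm
    have h2 : ∑ x ∈ F, D x * v x j = ∑ x : ↥F, d x * v x j := by
      rw [Finset.sum_attach F (fun x => D x * v x j) |>.symm]
      apply Finset.sum_congr rfl
      intro x _
      simp [hD, x.2]
    have h3 : ∑ x : ↥F, d x * v x j = M.mulVec d j.succ := by
      simp [Matrix.mulVec, dotProduct, hM, mul_comm]
    rw [h1, h2, h3, hdker]; rfl
  -- D is nonzero somewhere on F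
  have hDne : ∃ x ∈ F, D x ≠ 0 := by
    by_contra hcon
    push_neg at hcon
    apply hd0
    funext x
    have := hcon x x.2
    simpa [hD, x.2] using this
  -- the step size
  set F₀ : Finset ι := F.filter (fun x => D x ≠ 0) with hF₀
  have hF₀ne : F₀.Nonempty := by
    obtain ⟨x, hx, hDx⟩ := hDne
    exact ⟨x, Finset.mem_filter.mpr ⟨hx, hDx⟩⟩
  set cap : ι → ℚ := fun x => if 0 < D x then (1 - μ x) / D x else μ x / (-D x) with hcap
  obtain ⟨x₀, hx₀F₀, hx₀min⟩ := F₀.exists_min_image cap hF₀ne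
  set ε : ℚ := cap x₀ with hε
  have hx₀F : x₀ ∈ F := (Finset.mem_filter.mp hx₀F₀).1
  have hx₀D : D x₀ ≠ 0 := (Finset.mem_filter.mp hx₀F₀).2
  have hfrac : ∀ x ∈ F, 0 < μ x ∧ μ x < 1 := by
    intro x hx
    obtain ⟨hxS, hne0, hne1⟩ := Finset.mem_filter.mp hx
    exact ⟨lt_of_le_of_ne (h0 x) (Ne.symm hne0), lt_of_le_of_ne (h1 x) hne1⟩
  have hcappos : ∀ x ∈ F₀, 0 < cap x := by
    intro x hx
    obtain ⟨hxF, hDx⟩ := Finset.mem_filter.mp hx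
    obtain ⟨hμ0, hμ1⟩ := hfrac x hxF
    by_cases hpos : 0 < D x
    · simp only [hcap, if_pos hpos]
      exact div_pos (by linarith) hpos
    · have hneg : D x < 0 := lt_of_le_of_ne (not_lt.mp hpos) hDx
      simp only [hcap, if_neg hpos]
      exact div_pos hμ0 (neg_pos.mpr hneg)
  have hεpos : 0 < ε := hcappos x₀ hx₀F₀
  set μ' : ι → ℚ := fun x => μ x + ε * D x with hμ'
  -- key bound: for all x, 0 ≤ μ' x ≤ 1
  have hbound : ∀ x, 0 ≤ μ' x ∧ μ' x ≤ 1 := by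
    intro x
    by_cases hx : x ∈ F₀
    · obtain ⟨hxF, hDx⟩ := Finset.mem_filter.mp hx
      obtain ⟨hμ0, hμ1⟩ := hfrac x hxF
      have hεcap : ε ≤ cap x := hx₀min x hx
      rcases lt_or_gt_of_ne hDx with hneg | hpos
      · have hcapx : cap x = μ x / (-D x) := by simp [hcap, not_lt_of_gt hneg]
        rw [hcapx] at hεcap
        have hkey : ε * (-D x) ≤ μ x := (le_div_iff₀ (neg_pos.mpr hneg)).mp hεcap
        constructor
        · simp only [hμ']; nlinarith
        · have : ε * D x < 0 := mul_neg_of_pos_of_neg hεpos hneg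
          simp only [hμ']; linarith
      · have hcapx : cap x = (1 - μ x) / D x := by simp [hcap, hpos]
        rw [hcapx] at hεcap
        have hkey : ε * D x ≤ 1 - μ x := (le_div_iff₀ hpos).mp hεcap
        constructor
        · have : 0 ≤ ε * D x := le_of_lt (mul_pos hεpos hpos)
          simp only [hμ']; linarith
        · simp only [hμ']; linarith
    · have hDx : D x = 0 := by
        by_cases hxF : x ∈ F
        · by_contra hne
          exact hx (Finset.mem_filter.mpr ⟨hxF, hne⟩)
        · exact hDF x hxF
      simp only [hμ', hDx, mul_zero, add_zero]
      exact ⟨h0 x, h1 x⟩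
  -- μ' x₀ ∈ {0, 1}
  have hx₀01 : μ' x₀ = 0 ∨ μ' x₀ = 1 := by
    have hquot : D x₀ / D x₀ = 1 := div_self hx₀D
    rcases lt_or_gt_of_ne hx₀D with hneg | hpos
    · left
      have hεval : ε = μ x₀ / (-D x₀) := by simp [hε, hcap, not_lt_of_gt hneg]
      have : μ' x₀ = μ x₀ + (μ x₀ / (-D x₀)) * D x₀ := by rw [hμ']; rw [hεval]
      rw [this, div_neg, neg_mul, div_mul_cancel₀ _ hx₀D]
      ring
    · right
      have hεval : ε = (1 - μ x₀) / D x₀ := by simp [hε, hcap, hpos]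
      have : μ' x₀ = μ x₀ + ((1 - μ x₀) / D x₀) * D x₀ := by rw [hμ']; rw [hεval]
      rw [this, div_mul_cancel₀ _ hx₀D]
      ring
  refine ⟨μ', ⟨fun x => (hbound x).1, fun x => (hbound x).2, ?_, ?_, ?_⟩, ?_⟩
  · intro x hx
    have hxF : x ∉ F := fun h => hx (hFS h)
    simp [hμ', hsupp x hx, hDF x hxF]
  · simp only [hμ', Finset.sum_add_distrib, hsum, ← Finset.mul_sum, hDsum, mul_zero, add_zero]
  · intro j
    have : ∀ x ∈ S, μ' x * v x j = μ x * v x j + ε * (D x * v x j) := by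
      intro x _; simp only [hμ']; ring
    rw [Finset.sum_congr rfl this, Finset.sum_add_distrib, hker j, ← Finset.mul_sum, hDv j,
      mul_zero, add_zero]
  · apply Finset.card_lt_card
    constructor
    · intro x hx
      obtain ⟨hxS, hne0, hne1⟩ := Finset.mem_filter.mp hx
      by_cases hxF : x ∈ F
      · exact hxF
      · exfalso
        have hDx : D x = 0 := hDF x hxF
        have : μ' x = μ x := by simp [hμ', hDx]
        have hxSF : x ∈ S := hxS
        have : μ x ≠ 0 ∧ μ x ≠ 1 := ⟨by rw [← this]; exact hne0, by rw [← this]; exact hne1⟩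
        exact hxF (Finset.mem_filter.mpr ⟨hxSF, this⟩)
    · intro hsub
      have hx₀mem : x₀ ∈ Frac S μ' := hsub hx₀F
      obtain ⟨_, hne0, hne1⟩ := Finset.mem_filter.mp hx₀mem
      rcases hx₀01 with h | h
      · exact hne0 h
      · exact hne1 h

/-- Iterate `reduce_frac` to get a feasible point with few fractional coords. -/
theorem exists_small_frac (v : ι → Fin m → ℚ) (S : Finset ι) (c : ℚ) (μ : ι → ℚ)
    (hμ : Feas v S c μ) :
    ∃ μ', Feas v S c μ' ∧ (Frac S μ').card ≤ m + 1 := by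
  obtain ⟨N, hN⟩ : ∃ N, (Frac S μ).card ≤ N := ⟨_, le_refl _⟩
  induction N generalizing μ with
  | zero => exact ⟨μ, hμ, by omega⟩
  | succ N ih =>
    by_cases h : (Frac S μ).card ≤ m + 1
    · exact ⟨μ, hμ, h⟩
    · obtain ⟨μ', hμ', hlt⟩ := reduce_frac v S c μ hμ (by omega)
      exact ih μ' hμ' (by omega)

/-- From a good set of size `> m`, we can remove an element keeping goodness. -/
theorem good_erase (v : ι → Fin m → ℚ) (S : Finset ι) (hS : Good v S)
    (hcard : m < S.card) : ∃ x ∈ S, Good v (S.erase x) := by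
  obtain ⟨lam, hl0, hl1, hlsupp, hlsum, hlker⟩ := hS
  -- scale down to total c' = card - m - 1
  have hpos : (0:ℚ) < (S.card : ℚ) - m := by
    have : (m:ℚ) < S.card := by exact_mod_cast hcard
    linarith
  set r : ℚ := ((S.card : ℚ) - m - 1) / ((S.card : ℚ) - m) with hr
  have hm1 : (m:ℚ) + 1 ≤ S.card := by exact_mod_cast hcard
  have hr0 : 0 ≤ r := div_nonneg (by linarith) (le_of_lt hpos)
  have hr1 : r ≤ 1 := by
    rw [hr, div_le_one hpos]; linarith
  have hfeas : Feas v S ((S.card : ℚ) - m - 1) (fun x => r * lam x) := by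
    refine ⟨fun x => mul_nonneg hr0 (hl0 x), fun x => ?_, fun x hx => by show r * lam x = 0; rw [hlsupp x hx, mul_zero], ?_, fun j => ?_⟩
    · calc r * lam x ≤ 1 * 1 := mul_le_mul hr1 (hl1 x) (hl0 x) one_pos.le
      _ = 1 := one_mul 1
    · rw [← Finset.mul_sum, hlsum, hr, div_mul_cancel₀ _ (ne_of_gt hpos)]
    · have : ∀ x ∈ S, r * lam x * v x j = r * (lam x * v x j) := fun x _ => by ring
      rw [Finset.sum_congr rfl this, ← Finset.mul_sum, hlker j, mul_zero]
  obtain ⟨μ, hμ, hfr⟩ := exists_small_frac v S _ _ hfeas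
  obtain ⟨h0, h1, hsupp, hsum, hker⟩ := hμ
  -- find a zero coordinate in S
  have hzero : ∃ x ∈ S, μ x = 0 := by
    by_contra hcon
    push_neg at hcon
    -- every coordinate of S \ Frac equals 1
    have hone : ∀ x ∈ S \ Frac S μ, μ x = 1 := by
      intro x hx
      obtain ⟨hxS, hxF⟩ := Finset.mem_sdiff.mp hx
      by_contra hne
      exact hxF (Finset.mem_filter.mpr ⟨hxS, hcon x hxS, hne⟩)
    have hFS : Frac S μ ⊆ S := Finset.filter_subset _ _
    have hsplit : ∑ x ∈ S, μ x = ∑ x ∈ Frac S μ, μ x + ∑ x ∈ S \ Frac S μ, μ x := by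
      rw [add_comm, Finset.sum_sdiff hFS]
    have hsd : ∑ x ∈ S \ Frac S μ, μ x = ((S \ Frac S μ).card : ℚ) := by
      rw [Finset.sum_congr rfl hone, Finset.sum_const, nsmul_eq_mul, mul_one]
    have hcards : (S \ Frac S μ).card = S.card - (Frac S μ).card :=
      Finset.card_sdiff_of_subset hFS
    have hFle : (Frac S μ).card ≤ S.card := Finset.card_le_card hFS
    have hsumF : ∑ x ∈ Frac S μ, μ x = ((Frac S μ).card : ℚ) - m - 1 := by
      have : ((S \ Frac S μ).card : ℚ) = (S.card : ℚ) - (Frac S μ).card := by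
        rw [hcards]; push_cast [hFle]; ring
      rw [hsplit, hsd, this] at hsum
      linarith
    -- contradiction: LHS > RHS
    have hFle' : ((Frac S μ).card : ℚ) ≤ (m:ℚ) + 1 := by exact_mod_cast hfr
    rcases Finset.eq_empty_or_nonempty (Frac S μ) with he | hne
    · rw [he] at hsumF
      simp at hsumF
      have : (0:ℚ) ≤ m := by positivity
      linarith
    · have hgt : 0 < ∑ x ∈ Frac S μ, μ x := by
        apply Finset.sum_pos
        · intro x hx
          obtain ⟨hxS, hne0, _⟩ := Finset.mem_filter.mp hx
          exact lt_of_le_of_ne (h0 x) (Ne.symm hne0)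
        · exact hne
      linarith
  obtain ⟨x, hxS, hμx⟩ := hzero
  refine ⟨x, hxS, μ, h0, h1, ?_, ?_, ?_⟩
  · intro y hy
    by_cases hyS : y ∈ S
    · have : y = x := by
        by_contra hne
        exact hy (Finset.mem_erase.mpr ⟨hne, hyS⟩)
      rw [this, hμx]
    · exact hsupp y hyS
  · have hc1 : (1:ℕ) ≤ S.card := Finset.card_pos.mpr ⟨x, hxS⟩
    rw [Finset.card_erase_of_mem hxS, Finset.sum_erase S (by rw [hμx]), hsum]
    push_cast [hc1]
    ring
  · intro j
    rw [Finset.sum_erase S (show μ x * v x j = 0 by rw [hμx, zero_mul])]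
    exact hker j

theorem good_bound (v : ι → Fin m → ℚ) (Δ : ℚ) (hb : ∀ x j, |v x j| ≤ Δ)
    (S : Finset ι) (hS : Good v S) (j : Fin m) :
    |∑ x ∈ S, v x j| ≤ m * Δ := by
  obtain ⟨μ, h0, h1, _, hsum, hker⟩ := hS
  have hsplit : ∑ x ∈ S, v x j = ∑ x ∈ S, (1 - μ x) * v x j := by
    have : ∀ x ∈ S, (1 - μ x) * v x j = v x j - μ x * v x j := fun x _ => by ring
    rw [Finset.sum_congr rfl this, Finset.sum_sub_distrib, hker j, sub_zero]
  rw [hsplit]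
  calc |∑ x ∈ S, (1 - μ x) * v x j| ≤ ∑ x ∈ S, |(1 - μ x) * v x j| :=
        Finset.abs_sum_le_sum_abs _ _
    _ ≤ ∑ x ∈ S, (1 - μ x) * Δ := by
        apply Finset.sum_le_sum
        intro x _
        rw [abs_mul, abs_of_nonneg (by linarith [h1 x] : (0:ℚ) ≤ 1 - μ x)]
        exact mul_le_mul_of_nonneg_left (hb x j) (by linarith [h1 x])
    _ = ((S.card : ℚ) - ((S.card : ℚ) - m)) * Δ := by
        rw [Finset.sum_congr rfl (fun x _ => sub_mul 1 (μ x) Δ), Finset.sum_sub_distrib,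
          Finset.sum_const, ← Finset.sum_mul, hsum]
        push_cast
        ring
    _ = m * Δ := by ring

theorem small_bound (v : ι → Fin m → ℚ) (Δ : ℚ) (hΔ : 0 ≤ Δ) (hb : ∀ x j, |v x j| ≤ Δ)
    (S : Finset ι) (hS : S.card ≤ m) (j : Fin m) :
    |∑ x ∈ S, v x j| ≤ m * Δ := by
  calc |∑ x ∈ S, v x j| ≤ ∑ x ∈ S, |v x j| := Finset.abs_sum_le_sum_abs _ _
    _ ≤ ∑ _x ∈ S, Δ := Finset.sum_le_sum (fun x _ => hb x j)
    _ = (S.card : ℚ) * Δ := by rw [Finset.sum_const, nsmul_eq_mul]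
    _ ≤ m * Δ := by
        apply mul_le_mul_of_nonneg_right _ hΔ
        exact_mod_cast hS

theorem exists_chain (v : ι → Fin m → ℚ) (Δ : ℚ) (hΔ : 0 ≤ Δ) (hb : ∀ x j, |v x j| ≤ Δ) :
    ∀ (N : ℕ) (S : Finset ι), S.card ≤ N → (Good v S ∨ S.card ≤ m) →
    ∃ C : ℕ → Finset ι, C S.card = S ∧ (∀ k, C k ⊆ C (k+1)) ∧
      (∀ k, k ≤ S.card → (C k).card = k) ∧ (∀ k j, |∑ x ∈ C k, v x j| ≤ m * Δ) := by
  have hmΔ : (0:ℚ) ≤ m * Δ := mul_nonneg (by positivity) hΔ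
  intro N
  induction N with
  | zero =>
    intro S hS _
    have hSe : S = ∅ := Finset.card_eq_zero.mp (Nat.le_zero.mp hS)
    subst hSe
    refine ⟨fun _ => ∅, by simp, fun k => subset_refl _, fun k hk => by simp [Nat.le_zero.mp hk], fun k j => by simpa using hmΔ⟩
  | succ N ih =>
    intro S hSN hdisj
    rcases S.eq_empty_or_nonempty with rfl | ⟨x₀, hx₀⟩
    · refine ⟨fun _ => ∅, by simp, fun k => subset_refl _, fun k hk => by simp [Nat.le_zero.mp hk], fun k j => by simpa using hmΔ⟩
    have hSpos : 0 < S.card := Finset.card_pos.mpr ⟨x₀, hx₀⟩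
    obtain ⟨x, hxS, hdisj'⟩ :
        ∃ x ∈ S, (Good v (S.erase x) ∨ (S.erase x).card ≤ m) := by
      by_cases hcm : S.card ≤ m
      · exact ⟨x₀, hx₀, Or.inr (le_trans (Finset.card_le_card (Finset.erase_subset _ _)) hcm)⟩
      · have hGS : Good v S := hdisj.resolve_right hcm
        obtain ⟨x, hxS, hG⟩ := good_erase v S hGS (by omega)
        exact ⟨x, hxS, Or.inl hG⟩
    set S' := S.erase x with hS'
    have hcard' : S'.card = S.card - 1 := Finset.card_erase_of_mem hxS
    have hSS' : S.card = S'.card + 1 := by omega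
    obtain ⟨C', hC'top, hC'mono, hC'card, hC'bound⟩ := ih S' (by omega) hdisj'
    refine ⟨fun k => if S.card ≤ k then S else C' k, by simp, ?_, ?_, ?_⟩
    · intro k
      by_cases h1 : S.card ≤ k
      · simp [h1, le_trans h1 (Nat.le_succ k)]
      · by_cases h2 : S.card ≤ k + 1
        · have hk : k = S'.card := by omega
          simp only [if_neg h1, if_pos h2]
          rw [hk, hC'top]
          exact Finset.erase_subset _ _
        · simp only [if_neg h1, if_neg h2]
          exact hC'mono k
    · intro k hk
      by_cases h1 : S.card ≤ k
      · have : k = S.card := le_antisymm hk h1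
        simp [h1, this]
      · simp only [if_neg h1]
        exact hC'card k (by omega)
    · intro k j
      by_cases h1 : S.card ≤ k
      · simp only [if_pos h1]
        rcases hdisj with hG | hsm
        · exact good_bound v Δ hb S hG j
        · exact small_bound v Δ hΔ hb S hsm j
      · simp only [if_neg h1]
        exact hC'bound k j

theorem steinitz_chain (v : ι → Fin m → ℚ) (Δ : ℚ) (hΔ : 0 ≤ Δ)
    (hb : ∀ x j, |v x j| ≤ Δ) (h0 : ∀ j, ∑ x, v x j = 0) :
    ∃ C : ℕ → Finset ι, (∀ a b, a ≤ b → C a ⊆ C b) ∧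
      (∀ k, k ≤ Fintype.card ι → (C k).card = k) ∧
      (∀ k j, |∑ x ∈ C k, v x j| ≤ m * Δ) := by
  have hdisj : Good v (Finset.univ : Finset ι) ∨ (Finset.univ : Finset ι).card ≤ m := by
    by_cases hcm : (Finset.univ : Finset ι).card ≤ m
    · exact Or.inr hcm
    · left
      set t : ℕ := (Finset.univ : Finset ι).card with ht
      have htpos : (0:ℚ) < t := by
        have : 0 < t := by omega
        exact_mod_cast this
      refine ⟨fun _ => ((t:ℚ) - m) / t, fun _ => ?_, fun _ => ?_, fun x hx => absurd (Finset.mem_univ x) hx, ?_, fun j => ?_⟩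
      · apply div_nonneg _ htpos.le
        have : (m:ℚ) < t := by exact_mod_cast (by omega : m < t)
        linarith
      · rw [div_le_one htpos]
        have : (0:ℚ) ≤ m := by positivity
        linarith
      · rw [Finset.sum_const, nsmul_eq_mul, mul_div_assoc', mul_comm, ← mul_div_assoc', div_self (ne_of_gt htpos), mul_one]
      · show ∑ x : ι, ((t:ℚ) - m) / t * v x j = 0
        rw [← Finset.mul_sum, h0 j, mul_zero]
  obtain ⟨C, _, hmono, hcard, hbound⟩ :=
    exists_chain v Δ hΔ hb (Finset.univ : Finset ι).card Finset.univ le_rfl hdisj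
  refine ⟨C, ?_, by simpa using hcard, hbound⟩
  intro a b hab
  exact monotone_nat_of_le_succ (f := C) hmono hab
end Steinitz

def IsGraver {R C : Type*} [Fintype R] [Fintype C]
    (A : Matrix R C ℤ) (g : C → ℤ) : Prop :=
  g ≠ 0 ∧ A.mulVec g = 0 ∧
    ¬ ∃ u v : C → ℤ, u ≠ 0 ∧ v ≠ 0 ∧ A.mulVec u = 0 ∧ A.mulVec v = 0 ∧
        g = u + v ∧ ∀ i, 0 ≤ u i * v i


theorem graver_norm_bound (m n Δ : ℕ) (A : Matrix (Fin m) (Fin n) ℤ)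
    (hA : ∀ i j, |A i j| ≤ (Δ : ℤ)) (g : Fin n → ℤ) (hg : IsGraver A g) :
    ∑ i, |g i| ≤ (((2 * m * Δ + 1) ^ m : ℕ) : ℤ) := by
  classical
  obtain ⟨hgne, hker, hnodec⟩ := hg
  by_contra hlt
  push_neg at hlt
  set step : ((i : Fin n) × Fin (g i).natAbs) → Fin n → ℤ :=
    fun x j => if x.1 = j then (g x.1).sign else 0 with hstep
  set u : Finset ((i : Fin n) × Fin (g i).natAbs) → Fin n → ℤ :=
    fun T j => ∑ x ∈ T, step x j with hu
  have huT : ∀ (T : Finset ((i : Fin n) × Fin (g i).natAbs)) (j : Fin n),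
      u T j = ((T.filter (fun x => x.1 = j)).card : ℤ) * (g j).sign := by
    intro T j
    show ∑ x ∈ T, (if x.1 = j then (g x.1).sign else 0) = _
    rw [← Finset.sum_filter]
    calc ∑ x ∈ T.filter (fun x => x.1 = j), (g x.1).sign
        = ∑ x ∈ T.filter (fun x => x.1 = j), (g j).sign :=
          Finset.sum_congr rfl (fun x hx => by rw [(Finset.mem_filter.mp hx).2])
      _ = _ := by rw [Finset.sum_const, nsmul_eq_mul]
  have hcardle : ∀ (T : Finset ((i : Fin n) × Fin (g i).natAbs)) (j : Fin n),
      (T.filter (fun x => x.1 = j)).card ≤ (g j).natAbs := by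
    intro T j
    have := Finset.card_le_card_of_injOn (f := fun x : ((i : Fin n) × Fin (g i).natAbs) => (x.2 : ℕ))
      (s := T.filter (fun x => x.1 = j)) (t := Finset.range (g j).natAbs)
      (by
        rintro ⟨i, a⟩ hx
        have hx1 : i = j := (Finset.mem_filter.mp hx).2
        subst hx1
        exact Finset.mem_range.mpr a.isLt)
      (by
        rintro ⟨i, a⟩ hx ⟨i', b⟩ hy hxy
        have hx1 : i = j := (Finset.mem_filter.mp hx).2
        have hy1 : i' = j := (Finset.mem_filter.mp hy).2
        subst hx1
        subst hy1
        exact congrArg _ (Fin.ext hxy))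
    simpa using this
  have hsign1 : ∀ x : ((i : Fin n) × Fin (g i).natAbs), (g x.1).sign = 1 ∨ (g x.1).sign = -1 := by
    intro x
    have hpos : 0 < (g x.1).natAbs := lt_of_le_of_lt (Nat.zero_le _) x.2.isLt
    have hne : g x.1 ≠ 0 := by
      intro h; rw [h] at hpos; simp at hpos
    rcases lt_or_gt_of_ne hne with h | h
    · right; exact Int.sign_eq_neg_one_of_neg h
    · left; exact Int.sign_eq_one_of_pos h
  have huniv : u Finset.univ = g := by
    funext j
    show ∑ x : ((i : Fin n) × Fin (g i).natAbs), step x j = g j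
    rw [← Finset.univ_sigma_univ, Finset.sum_sigma]
    have hinner : ∀ i : Fin n, ∑ a : Fin (g i).natAbs, step ⟨i, a⟩ j
        = if i = j then ((g i).natAbs : ℤ) * (g i).sign else 0 := by
      intro i
      show ∑ _a : Fin (g i).natAbs, (if i = j then (g i).sign else 0) = _
      rw [Finset.sum_const, Finset.card_univ, Fintype.card_fin, nsmul_eq_mul]
      by_cases h : i = j
      · rw [if_pos h, if_pos h]
      · rw [if_neg h, if_neg h, mul_zero]
    rw [Finset.sum_congr rfl (fun i _ => hinner i), Finset.sum_ite_eq' Finset.univ j]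
    simp only [Finset.mem_univ, if_true]
    rw [mul_comm]
    exact Int.sign_mul_natAbs (g j)
  have hAstep : ∀ (x : ((i : Fin n) × Fin (g i).natAbs)) (r : Fin m),
      A.mulVec (step x) r = A r x.1 * (g x.1).sign := by
    intro x r
    show ∑ j, A r j * (if x.1 = j then (g x.1).sign else 0) = _
    rw [Finset.sum_congr rfl (fun j _ => by rw [mul_ite, mul_zero]),
      Finset.sum_ite_eq Finset.univ x.1 (fun j => A r j * (g x.1).sign)]
    simp
  have hAbound : ∀ (x : ((i : Fin n) × Fin (g i).natAbs)) (r : Fin m),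
      |A.mulVec (step x) r| ≤ (Δ : ℤ) := by
    intro x r
    rw [hAstep, abs_mul]
    rcases hsign1 x with h | h <;> rw [h] <;> simpa using hA r x.1
  have hAsum : ∀ T : Finset ((i : Fin n) × Fin (g i).natAbs),
      A.mulVec (u T) = ∑ x ∈ T, A.mulVec (step x) := by
    intro T
    have h1 : u T = ∑ x ∈ T, step x := by
      funext j
      show ∑ x ∈ T, step x j = _
      rw [Finset.sum_apply]
    rw [h1, ← Matrix.mulVecLin_apply, map_sum]
    simp [Matrix.mulVecLin_apply]
  set w : ((i : Fin n) × Fin (g i).natAbs) → Fin m → ℚ :=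
    fun x r => ((A.mulVec (step x) r : ℤ) : ℚ) with hw
  have hw0 : ∀ r, ∑ x : ((i : Fin n) × Fin (g i).natAbs), w x r = 0 := by
    intro r
    have h2 : A.mulVec g = ∑ x : ((i : Fin n) × Fin (g i).natAbs), A.mulVec (step x) := by
      have := hAsum Finset.univ
      rw [huniv] at this
      exact this
    have h1 : ∑ x : ((i : Fin n) × Fin (g i).natAbs), A.mulVec (step x) r = 0 := by
      calc ∑ x : ((i : Fin n) × Fin (g i).natAbs), A.mulVec (step x) r
          = (∑ x : ((i : Fin n) × Fin (g i).natAbs), A.mulVec (step x)) r := by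
            rw [Finset.sum_apply]
        _ = 0 := by rw [← h2, hker]; rfl
    show ∑ x : ((i : Fin n) × Fin (g i).natAbs), ((A.mulVec (step x) r : ℤ) : ℚ) = 0
    rw [← Int.cast_sum, h1, Int.cast_zero]
  have hwb : ∀ x r, |w x r| ≤ ((Δ : ℕ) : ℚ) := by
    intro x r
    show |((A.mulVec (step x) r : ℤ) : ℚ)| ≤ _
    rw [← Int.cast_abs]
    exact_mod_cast hAbound x r
  obtain ⟨C, hmono, hcard, hbound⟩ := steinitz_chain w ((Δ : ℕ) : ℚ)
    (by positivity) hwb hw0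
  set t : ℕ := Fintype.card ((i : Fin n) × Fin (g i).natAbs) with ht
  have hsum_abs : ∑ i, |g i| = (t : ℤ) := by
    rw [ht, Fintype.card_sigma]
    push_cast
    apply Finset.sum_congr rfl
    intro i _
    rw [Fintype.card_fin, Int.abs_eq_natAbs]
  set N : ℕ := (2 * m * Δ + 1) ^ m with hN
  have htN : N < t := by
    have : (N : ℤ) < (t : ℤ) := by rw [← hsum_abs]; exact hlt
    exact_mod_cast this
  set M : ℕ := m * Δ with hM
  set p : ℕ → Fin m → ℤ := fun k => A.mulVec (u (C k)) with hp
  have hpk : ∀ k r, p k r = ∑ x ∈ C k, A.mulVec (step x) r := by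
    intro k r
    show (A.mulVec (u (C k))) r = _
    rw [hAsum (C k), Finset.sum_apply]
  have hpb : ∀ k r, |p k r| ≤ (M : ℤ) := by
    intro k r
    have h1 : ((p k r : ℤ) : ℚ) = ∑ x ∈ C k, w x r := by
      rw [hpk]
      push_cast
      rfl
    have h2 := hbound k r
    rw [← h1] at h2
    have h3 : |((p k r : ℤ) : ℚ)| ≤ ((M : ℕ) : ℚ) := by
      rw [hM]
      push_cast
      push_cast at h2
      exact h2
    rw [← Int.cast_abs] at h3
    exact_mod_cast h3
  set B : Finset (Fin m → ℤ) := Fintype.piFinset (fun _ => Finset.Icc (-(M:ℤ)) (M:ℤ)) with hB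
  have hBcard : B.card = N := by
    rw [hB, Fintype.card_piFinset]
    have hIcc : (Finset.Icc (-(M:ℤ)) (M:ℤ)).card = 2 * M + 1 := by
      rw [Int.card_Icc]
      omega
    rw [Finset.prod_congr rfl (fun _ _ => hIcc), Finset.prod_const, Finset.card_univ,
      Fintype.card_fin, hN, hM]
    ring_nf
  have hmaps : ∀ k ∈ Finset.Icc 1 t, p k ∈ B := by
    intro k _
    rw [hB, Fintype.mem_piFinset]
    intro r
    rw [Finset.mem_Icc]
    exact abs_le.mp (hpb k r)
  have hIcc_card : B.card < (Finset.Icc 1 t).card := by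
    rw [Nat.card_Icc, hBcard]
    omega
  obtain ⟨a, haI, b, hbI, hne, hpeq⟩ :=
    Finset.exists_ne_map_eq_of_card_lt_of_maps_to hIcc_card hmaps
  obtain ⟨a, b, hab, haI, hbI, hpeq⟩ :
      ∃ a b, a < b ∧ a ∈ Finset.Icc 1 t ∧ b ∈ Finset.Icc 1 t ∧ p a = p b := by
    rcases lt_or_gt_of_ne hne with h | h
    · exact ⟨a, b, h, haI, hbI, hpeq⟩
    · exact ⟨b, a, h, hbI, haI, hpeq.symm⟩
  obtain ⟨ha1, hat⟩ := Finset.mem_Icc.mp haI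
  obtain ⟨hb1, hbt⟩ := Finset.mem_Icc.mp hbI
  have hsub : C a ⊆ C b := hmono a b hab.le
  set T : Finset ((i : Fin n) × Fin (g i).natAbs) := C b \ C a with hT
  have hTcard : T.card = b - a := by
    rw [hT, Finset.card_sdiff_of_subset hsub, hcard a hat, hcard b hbt]
  have hTne : T.Nonempty := by
    rw [← Finset.card_pos, hTcard]
    omega
  have hCane : (C a).Nonempty := by
    rw [← Finset.card_pos, hcard a hat]
    omega
  have hune : ∀ S : Finset ((i : Fin n) × Fin (g i).natAbs), S.Nonempty → u S ≠ 0 := by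
    intro S ⟨x, hxS⟩ hzero
    have h1 : u S x.1 = 0 := congrFun hzero x.1
    rw [huT] at h1
    have hcpos : 0 < (S.filter (fun y => y.1 = x.1)).card :=
      Finset.card_pos.mpr ⟨x, Finset.mem_filter.mpr ⟨hxS, rfl⟩⟩
    rcases hsign1 x with h | h <;> rw [h] at h1 <;> omega
  have hAu : A.mulVec (u T) = 0 := by
    have hsd : ∑ x ∈ T, A.mulVec (step x) + ∑ x ∈ C a, A.mulVec (step x)
        = ∑ x ∈ C b, A.mulVec (step x) := Finset.sum_sdiff hsub
    have hpk' : ∀ k, ∑ x ∈ C k, A.mulVec (step x) = p k := by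
      intro k
      funext r
      rw [Finset.sum_apply, ← hpk]
    rw [hpk' a, hpk' b] at hsd
    rw [hAsum T]
    calc ∑ x ∈ T, A.mulVec (step x) = p b - p a := by
          rw [← hsd]; ring
      _ = 0 := by rw [hpeq]; ring
  have hvT : g - u T = u (Finset.univ \ T) := by
    funext j
    have hsd : ∑ x ∈ Finset.univ \ T, step x j + ∑ x ∈ T, step x j
        = ∑ x ∈ Finset.univ, step x j := Finset.sum_sdiff (Finset.subset_univ T)
    have h1 : u (Finset.univ \ T) j + u T j = u Finset.univ j := hsd
    rw [huniv] at h1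
    show g j - u T j = u (Finset.univ \ T) j
    linarith [h1]
  have hAv : A.mulVec (g - u T) = 0 := by
    rw [Matrix.mulVec_sub, hker, hAu, sub_zero]
  have hvne : g - u T ≠ 0 := by
    rw [hvT]
    apply hune
    obtain ⟨x, hx⟩ := hCane
    exact ⟨x, Finset.mem_sdiff.mpr ⟨Finset.mem_univ x, fun hxT => (Finset.mem_sdiff.mp hxT).2 hx⟩⟩
  have hsigncompat : ∀ j, 0 ≤ u T j * (g - u T) j := by
    intro j
    have hc : (0 : ℤ) ≤ ((T.filter (fun x => x.1 = j)).card : ℤ) := Int.natCast_nonneg _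
    have hcle : ((T.filter (fun x => x.1 = j)).card : ℤ) ≤ ((g j).natAbs : ℤ) := by
      exact_mod_cast hcardle T j
    show 0 ≤ u T j * (g j - u T j)
    rw [huT]
    set c : ℤ := ((T.filter (fun x => x.1 = j)).card : ℤ) with hcc
    set s : ℤ := (g j).sign with hs
    set nA : ℤ := ((g j).natAbs : ℤ) with hnA
    have hgj : g j = s * nA := (Int.sign_mul_natAbs (g j)).symm
    rw [hgj]
    calc (0:ℤ) ≤ (c * (nA - c)) * s ^ 2 :=
          mul_nonneg (mul_nonneg hc (by linarith)) (sq_nonneg s)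
      _ = c * s * (s * nA - c * s) := by ring
  exact hnodec ⟨u T, g - u T, hune T hTne, hvne, hAu, hAv, by funext j; show g j = _; simp,
    hsigncompat⟩
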